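/- If {h_1, ..., h_f} is a pairwise non-interleaved set of occurrences of an N-node serial episode α, then the restrictions h'_k = (h_k(v_1), ..., h_k(v_{N−1})), which are occurrences of the prefix subepisode α_p = α[1]→...→α[N−1], form a pairwise non-interleaved set of f occurrences of α_p; similarly for the suffix subepisode. Hence f_ni(α_p) ≥ f_ni(α) and f_ni(α_s) ≥ f_ni(α). -/

import Mathlib

variable {A : Type}

/-- An occurrence of the (N+1)-node serial episode `α` in the event sequence
`E` (of length `n`): a strictly increasing index map matching the event-types. -/
def IsOcc (E : ℕ → A) (n : ℕ) {N : ℕ} (α : Fin (N+1) → A) (h : Fin (N+1) → ℕ) : Prop :=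
  StrictMono h ∧ (∀ i, h i < n) ∧ (∀ i, E (h i) = α i)

/-- Earliest transiting occurrence: each `h i.succ` is the least index after
`h i.castSucc` carrying event-type `α i.succ`. -/
def IsET (E : ℕ → A) (n : ℕ) {N : ℕ} (α : Fin (N+1) → A) (h : Fin (N+1) → ℕ) : Prop :=
  IsOcc E n α h ∧ ∀ (i : Fin N) (j : ℕ), h i.castSucc < j → E j = α i.succ → h i.succ ≤ j

/-- Lexicographic order on occurrences. -/
def OccLex {N : ℕ} (h1 h2 : Fin (N+1) → ℕ) : Prop :=
  ∃ i, (∀ k < i, h1 k = h2 k) ∧ h1 i < h2 i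

/-- The window `[a, b]` contains an occurrence of `α`. -/
def WindowHasOcc (E : ℕ → A) (n : ℕ) {N : ℕ} (α : Fin (N+1) → A) (a b : ℕ) : Prop :=
  ∃ h, IsOcc E n α h ∧ a ≤ h 0 ∧ h (Fin.last N) ≤ b

/-- `[a, b]` is a minimal window of `α`: it contains an occurrence and no
proper subwindow contains one. -/
def IsMinWindow (E : ℕ → A) (n : ℕ) {N : ℕ} (α : Fin (N+1) → A) (a b : ℕ) : Prop :=
  WindowHasOcc E n α a b ∧
    ∀ c d, a ≤ c → d ≤ b → (a < c ∨ d < b) → ¬ WindowHasOcc E n α c d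

/-- A minimal occurrence: its window is a minimal window. -/
def IsMinOcc (E : ℕ → A) (n : ℕ) {N : ℕ} (α : Fin (N+1) → A) (h : Fin (N+1) → ℕ) : Prop :=
  IsOcc E n α h ∧ IsMinWindow E n α (h 0) (h (Fin.last N))

/-- `h'` is the earliest transiting occurrence immediately following `h`
in the lexicographic enumeration of earliest transiting occurrences. -/
def NextET (E : ℕ → A) (n : ℕ) {N : ℕ} (α : Fin (N+1) → A) (h h' : Fin (N+1) → ℕ) : Prop :=
  IsET E n α h ∧ IsET E n α h' ∧ OccLex h h' ∧
    ¬ ∃ g, IsET E n α g ∧ OccLex h g ∧ OccLex g h'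

/-- `h1 <⋆ h2` are non-interleaved: `h2 (v_j) ≥ h1 (v_{j+1})` for all `j < N`. -/
def NonInterleaved {N : ℕ} (h1 h2 : Fin (N+1) → ℕ) : Prop :=
  ∀ i : Fin N, h1 i.succ ≤ h2 i.castSucc

/-- Non-overlapped occurrences: one ends strictly before the other begins. -/
def NonOverlapped {N : ℕ} (h1 h2 : Fin (N+1) → ℕ) : Prop :=
  h1 (Fin.last N) < h2 0 ∨ h2 (Fin.last N) < h1 0

/-- Minimal-occurrence frequency: the number of minimal windows. -/
noncomputable def fmi (E : ℕ → A) (n : ℕ) {N : ℕ} (α : Fin (N+1) → A) : ℕ :=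
  {p : ℕ × ℕ | IsMinWindow E n α p.1 p.2}.ncard

/-- Non-interleaved frequency: the maximum cardinality of a pairwise
non-interleaved set of occurrences. -/
noncomputable def fni (E : ℕ → A) (n : ℕ) {N : ℕ} (α : Fin (N+1) → A) : ℕ :=
  sSup {m | ∃ S : Set (Fin (N+1) → ℕ), S.Finite ∧ S.ncard = m ∧
    (∀ h ∈ S, IsOcc E n α h) ∧
    S.Pairwise (fun a b => NonInterleaved a b ∨ NonInterleaved b a)}

/-- Non-overlapped frequency: the maximum cardinality of a pairwise
non-overlapped set of occurrences. -/
noncomputable def fno (E : ℕ → A) (n : ℕ) {N : ℕ} (α : Fin (N+1) → A) : ℕ :=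
  sSup {m | ∃ S : Set (Fin (N+1) → ℕ), S.Finite ∧ S.ncard = m ∧
    (∀ h ∈ S, IsOcc E n α h) ∧ S.Pairwise NonOverlapped}

/-- Distinct-occurrences frequency: the maximum cardinality of a set of
occurrences no two of which share two or more events. -/
noncomputable def fd (E : ℕ → A) (n : ℕ) {N : ℕ} (α : Fin (N+1) → A) : ℕ :=
  sSup {m | ∃ S : Set (Fin (N+1) → ℕ), S.Finite ∧ S.ncard = m ∧
    (∀ h ∈ S, IsOcc E n α h) ∧
    S.Pairwise (fun a b => (Set.range a ∩ Set.range b).ncard ≤ 1)}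

lemma aux_finite_occ (n : ℕ) (M : ℕ) :
    ({h : Fin M → ℕ | ∀ i, h i < n}).Finite := by
  have := Set.Finite.pi (fun _ : Fin M => Set.finite_Iio n)
  exact this.subset (by intro h hh; simp only [Set.mem_pi, Set.mem_Iio]; intro i _; exact hh i)

lemma aux_bdd (E : ℕ → A) (n : ℕ) {N : ℕ} (α : Fin (N+1) → A) :
    BddAbove {m | ∃ S : Set (Fin (N+1) → ℕ), S.Finite ∧ S.ncard = m ∧
      (∀ h ∈ S, IsOcc E n α h) ∧
      S.Pairwise (fun a b => NonInterleaved a b ∨ NonInterleaved b a)} := by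
  refine ⟨({h : Fin (N+1) → ℕ | ∀ i, h i < n}).ncard, ?_⟩
  rintro m ⟨S, hfin, rfl, hocc, -⟩
  exact Set.ncard_le_ncard (fun h hS i => (hocc h hS).2.1 i) (aux_finite_occ n (N+1))

lemma aux_prefix_ne {N : ℕ} {h1 h2 : Fin (N+2) → ℕ}
    (m1 : StrictMono h1) (m2 : StrictMono h2)
    (hd : NonInterleaved h1 h2 ∨ NonInterleaved h2 h1)
    (heq : (fun i : Fin (N+1) => h1 i.castSucc) = (fun i : Fin (N+1) => h2 i.castSucc)) :
    False := by
  have he : ∀ i : Fin (N+1), h1 i.castSucc = h2 i.castSucc := fun i => congrFun heq i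
  rcases hd with hd | hd
  · have h1le := hd (0 : Fin (N+1))
    have : h2 (0 : Fin (N+1)).castSucc < h1 (0 : Fin (N+1)).succ := by
      rw [← he]; exact m1 (Fin.castSucc_lt_succ (i := 0))
    omega
  · have h1le := hd (0 : Fin (N+1))
    have : h1 (0 : Fin (N+1)).castSucc < h2 (0 : Fin (N+1)).succ := by
      rw [he]; exact m2 (Fin.castSucc_lt_succ (i := 0))
    omega

lemma aux_suffix_ne {N : ℕ} {h1 h2 : Fin (N+2) → ℕ}
    (m1 : StrictMono h1) (m2 : StrictMono h2)
    (hd : NonInterleaved h1 h2 ∨ NonInterleaved h2 h1)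
    (heq : (fun i : Fin (N+1) => h1 i.succ) = (fun i : Fin (N+1) => h2 i.succ)) :
    False := by
  have he : ∀ i : Fin (N+1), h1 i.succ = h2 i.succ := fun i => congrFun heq i
  rcases hd with hd | hd
  · have h1le := hd (0 : Fin (N+1))
    have : h2 (0 : Fin (N+1)).castSucc < h1 (0 : Fin (N+1)).succ := by
      rw [he]; exact m2 (Fin.castSucc_lt_succ (i := 0))
    omega
  · have h1le := hd (0 : Fin (N+1))
    have : h1 (0 : Fin (N+1)).castSucc < h2 (0 : Fin (N+1)).succ := by
      rw [← he]; exact m1 (Fin.castSucc_lt_succ (i := 0))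
    omega

lemma aux_prefix_ni {N : ℕ} {h1 h2 : Fin (N+2) → ℕ}
    (hd : NonInterleaved h1 h2) :
    NonInterleaved (fun i : Fin (N+1) => h1 i.castSucc) (fun i : Fin (N+1) => h2 i.castSucc) := by
  intro i
  have := hd i.castSucc
  simpa only [Fin.succ_castSucc] using this

lemma aux_suffix_ni {N : ℕ} {h1 h2 : Fin (N+2) → ℕ}
    (hd : NonInterleaved h1 h2) :
    NonInterleaved (fun i : Fin (N+1) => h1 i.succ) (fun i : Fin (N+1) => h2 i.succ) := by
  intro i
  have := hd i.succ
  simpa only [Fin.succ_castSucc] using this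

lemma aux_main (E : ℕ → A) (n : ℕ) {N : ℕ} (α : Fin (N+2) → A)
    (S : Set (Fin (N+2) → ℕ))
    (hocc : ∀ h ∈ S, IsOcc E n α h)
    (hni : S.Pairwise (fun a b => NonInterleaved a b ∨ NonInterleaved b a)) :
    (∀ g ∈ (fun (h : Fin (N+2) → ℕ) (i : Fin (N+1)) => h i.castSucc) '' S,
        IsOcc E n (fun i : Fin (N+1) => α i.castSucc) g) ∧
    ((fun (h : Fin (N+2) → ℕ) (i : Fin (N+1)) => h i.castSucc) '' S).Pairwise
        (fun a b => NonInterleaved a b ∨ NonInterleaved b a) ∧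
    ((fun (h : Fin (N+2) → ℕ) (i : Fin (N+1)) => h i.castSucc) '' S).ncard = S.ncard ∧
    (∀ g ∈ (fun (h : Fin (N+2) → ℕ) (i : Fin (N+1)) => h i.succ) '' S,
        IsOcc E n (fun i : Fin (N+1) => α i.succ) g) ∧
    ((fun (h : Fin (N+2) → ℕ) (i : Fin (N+1)) => h i.succ) '' S).Pairwise
        (fun a b => NonInterleaved a b ∨ NonInterleaved b a) ∧
    ((fun (h : Fin (N+2) → ℕ) (i : Fin (N+1)) => h i.succ) '' S).ncard = S.ncard := by
  have injP : Set.InjOn (fun (h : Fin (N+2) → ℕ) (i : Fin (N+1)) => h i.castSucc) S := by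
    intro h1 h1S h2 h2S heq
    by_contra hne
    exact aux_prefix_ne (hocc h1 h1S).1 (hocc h2 h2S).1 (hni h1S h2S hne) heq
  have injS : Set.InjOn (fun (h : Fin (N+2) → ℕ) (i : Fin (N+1)) => h i.succ) S := by
    intro h1 h1S h2 h2S heq
    by_contra hne
    exact aux_suffix_ne (hocc h1 h1S).1 (hocc h2 h2S).1 (hni h1S h2S hne) heq
  refine ⟨?_, ?_, Set.ncard_image_of_injOn injP, ?_, ?_, Set.ncard_image_of_injOn injS⟩
  · rintro g ⟨h, hS, rfl⟩
    obtain ⟨hm, hb, hα⟩ := hocc h hS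
    exact ⟨fun a b hab => hm (Fin.castSucc_lt_castSucc_iff.mpr hab),
      fun i => hb _, fun i => hα _⟩
  · rintro a ⟨h1, h1S, rfl⟩ b ⟨h2, h2S, rfl⟩ hab
    have hne : h1 ≠ h2 := fun e => hab (by rw [e])
    rcases hni h1S h2S hne with hd | hd
    · exact Or.inl (aux_prefix_ni hd)
    · exact Or.inr (aux_prefix_ni hd)
  · rintro g ⟨h, hS, rfl⟩
    obtain ⟨hm, hb, hα⟩ := hocc h hS
    exact ⟨fun a b hab => hm (Fin.succ_lt_succ_iff.mpr hab),
      fun i => hb _, fun i => hα _⟩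
  · rintro a ⟨h1, h1S, rfl⟩ b ⟨h2, h2S, rfl⟩ hab
    have hne : h1 ≠ h2 := fun e => hab (by rw [e])
    rcases hni h1S h2S hne with hd | hd
    · exact Or.inl (aux_suffix_ni hd)
    · exact Or.inr (aux_suffix_ni hd)

theorem stmt15 (E : ℕ → A) (n : ℕ) {N : ℕ} (α : Fin (N+2) → A)
    (S : Set (Fin (N+2) → ℕ)) (hfin : S.Finite)
    (hocc : ∀ h ∈ S, IsOcc E n α h)
    (hni : S.Pairwise (fun a b => NonInterleaved a b ∨ NonInterleaved b a)) :
    (∀ g ∈ (fun (h : Fin (N+2) → ℕ) (i : Fin (N+1)) => h i.castSucc) '' S,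
        IsOcc E n (fun i : Fin (N+1) => α i.castSucc) g) ∧
    ((fun (h : Fin (N+2) → ℕ) (i : Fin (N+1)) => h i.castSucc) '' S).Pairwise
        (fun a b => NonInterleaved a b ∨ NonInterleaved b a) ∧
    ((fun (h : Fin (N+2) → ℕ) (i : Fin (N+1)) => h i.castSucc) '' S).ncard = S.ncard ∧
    (∀ g ∈ (fun (h : Fin (N+2) → ℕ) (i : Fin (N+1)) => h i.succ) '' S,
        IsOcc E n (fun i : Fin (N+1) => α i.succ) g) ∧
    ((fun (h : Fin (N+2) → ℕ) (i : Fin (N+1)) => h i.succ) '' S).Pairwise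
        (fun a b => NonInterleaved a b ∨ NonInterleaved b a) ∧
    ((fun (h : Fin (N+2) → ℕ) (i : Fin (N+1)) => h i.succ) '' S).ncard = S.ncard ∧
    fni E n α ≤ fni E n (fun i : Fin (N+1) => α i.castSucc) ∧
    fni E n α ≤ fni E n (fun i : Fin (N+1) => α i.succ) := by
  obtain ⟨o1, p1, c1, o2, p2, c2⟩ := aux_main E n α S hocc hni
  have hne0 : ∀ (M : ℕ) (β : Fin (M+1) → A),
      ({m | ∃ T : Set (Fin (M+1) → ℕ), T.Finite ∧ T.ncard = m ∧
        (∀ h ∈ T, IsOcc E n β h) ∧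
        T.Pairwise (fun a b => NonInterleaved a b ∨ NonInterleaved b a)} : Set ℕ).Nonempty :=
    fun M β => ⟨0, ∅, Set.finite_empty, Set.ncard_empty _, by simp, Set.pairwise_empty _⟩
  constructor
  · exact o1
  refine ⟨p1, c1, o2, p2, c2, ?_, ?_⟩
  · refine csSup_le_csSup (aux_bdd E n _) (hne0 _ α) ?_
    rintro m ⟨T, Tfin, rfl, Tocc, Tni⟩
    obtain ⟨To, Tp, Tc, -, -, -⟩ := aux_main E n α T Tocc Tni
    exact ⟨_, Tfin.image _, Tc, To, Tp⟩
  · refine csSup_le_csSup (aux_bdd E n _) (hne0 _ α) ?_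
    rintro m ⟨T, Tfin, rfl, Tocc, Tni⟩
    obtain ⟨-, -, -, To, Tp, Tc⟩ := aux_main E n α T Tocc Tni
    exact ⟨_, Tfin.image _, Tc, To, Tp⟩
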